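/- Let V be finite with |V| = n > 2N, S̄ ⊆ V with |S̄| = N, δ > 0, and f(S) = min{1 + |S ∩ S̄|, |S|} + δ·|S|. The function f is strictly increasing and submodular, and f(S̄)/f(R*) = (N + δN)/(1 + δN) for any R* ⊆ V \ S̄ with |R*| = N; hence this ratio tends to N as δ → 0⁺. -/
import Mathlib


/-- The function `f(S) = min(1 + |S ∩ S̄|, |S|) + δ|S|` is strictly increasing and submodular,
and the greedy-to-optimal ratio `f(S̄)/f(R*) = (N + δN)/(1 + δN)` tends to `N` as `δ → 0⁺`. -/
theorem counterexample_curvature {V : Type*} [DecidableEq V] [Fintype V]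
    (n N : ℕ) (hn : Fintype.card V = n) (h2N : 2 * N < n)
    (Sbar : Finset V) (hSbar : Sbar.card = N)
    (f : ℝ → Finset V → ℝ)
    (hf : ∀ (δ : ℝ) (S : Finset V),
      f δ S = ((min (1 + (S ∩ Sbar).card) S.card : ℕ) : ℝ) + δ * S.card) :
    (∀ δ : ℝ, 0 < δ →
      (∀ S T : Finset V, S ⊂ T → f δ S < f δ T) ∧
      (∀ (S T : Finset V) (v : V), S ⊆ T → v ∉ T →
        f δ (insert v S) - f δ S ≥ f δ (insert v T) - f δ T) ∧
      (∀ Rstar : Finset V, Rstar ⊆ Sbarᶜ → Rstar.card = N →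
        f δ Sbar / f δ Rstar = ((N : ℝ) + δ * N) / (1 + δ * N))) ∧
    Filter.Tendsto (fun δ : ℝ => ((N : ℝ) + δ * N) / (1 + δ * N))
      (nhdsWithin 0 (Set.Ioi 0)) (nhds (N : ℝ)) := by
  constructor
  · intro δ hδ
    refine ⟨?_, ?_, ?_⟩
    · -- strictly increasing
      intro S T hST
      have hc : S.card < T.card := Finset.card_lt_card hST
      have hi : (S ∩ Sbar).card ≤ (T ∩ Sbar).card :=
        Finset.card_le_card (Finset.inter_subset_inter hST.subset (Finset.Subset.refl _))
      have hg : min (1 + (S ∩ Sbar).card) S.card ≤ min (1 + (T ∩ Sbar).card) T.card := by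
        omega
      rw [hf, hf]
      have h2 : δ * (S.card : ℝ) < δ * (T.card : ℝ) :=
        mul_lt_mul_of_pos_left (by exact_mod_cast hc) hδ
      have h1 : ((min (1 + (S ∩ Sbar).card) S.card : ℕ) : ℝ)
          ≤ ((min (1 + (T ∩ Sbar).card) T.card : ℕ) : ℝ) := by exact_mod_cast hg
      linarith
    · -- submodular
      intro S T v hST hvT
      have hvS : v ∉ S := fun h => hvT (hST h)
      have hcS : (insert v S).card = S.card + 1 := Finset.card_insert_of_notMem hvS
      have hcT : (insert v T).card = T.card + 1 := Finset.card_insert_of_notMem hvT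
      have has : (S ∩ Sbar).card ≤ S.card := Finset.card_le_card Finset.inter_subset_left
      have hbt : (T ∩ Sbar).card ≤ T.card := Finset.card_le_card Finset.inter_subset_left
      have hkey : (T ∩ Sbar).card = T.card → (S ∩ Sbar).card = S.card := by
        intro h
        have hT : T ∩ Sbar = T :=
          Finset.eq_of_subset_of_card_le Finset.inter_subset_left (le_of_eq h.symm)
        have hTS : T ⊆ Sbar := Finset.inter_eq_left.mp hT
        have hSS : S ⊆ Sbar := hST.trans hTS
        rw [Finset.inter_eq_left.mpr hSS]
      have hnat : min (1 + ((insert v S) ∩ Sbar).card) (S.card + 1)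
            + min (1 + (T ∩ Sbar).card) T.card
          ≥ min (1 + ((insert v T) ∩ Sbar).card) (T.card + 1)
            + min (1 + (S ∩ Sbar).card) S.card := by
        by_cases hv : v ∈ Sbar
        · rw [Finset.insert_inter_of_mem hv, Finset.insert_inter_of_mem hv,
            Finset.card_insert_of_notMem (fun h => hvS (Finset.mem_inter.mp h).1),
            Finset.card_insert_of_notMem (fun h => hvT (Finset.mem_inter.mp h).1)]
          omega
        · rw [Finset.insert_inter_of_notMem hv, Finset.insert_inter_of_notMem hv]
          omega
      rw [hf, hf, hf, hf, hcS, hcT]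
      have h1 : ((min (1 + ((insert v S) ∩ Sbar).card) (S.card + 1) : ℕ) : ℝ)
            + ((min (1 + (T ∩ Sbar).card) T.card : ℕ) : ℝ)
          ≥ ((min (1 + ((insert v T) ∩ Sbar).card) (T.card + 1) : ℕ) : ℝ)
            + ((min (1 + (S ∩ Sbar).card) S.card : ℕ) : ℝ) := by exact_mod_cast hnat
      simp only [Nat.cast_add, Nat.cast_one]
      linarith [h1]
    · -- ratio
      intro Rstar hR hcard
      have hdisj : Rstar ∩ Sbar = ∅ := by
        apply Finset.eq_empty_of_forall_notMem
        intro x hx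
        have := Finset.mem_inter.mp hx
        exact (Finset.mem_compl.mp (hR this.1)) this.2
      rw [hf, hf, Finset.inter_self, hSbar, hdisj, hcard, Finset.card_empty]
      rcases Nat.eq_zero_or_pos N with h0 | hpos
      · subst h0; norm_num
      · have e1 : min (1 + N) N = N := by omega
        have e2 : min (1 + 0) N = 1 := by omega
        rw [e1, e2]
        norm_num
  · -- limit
    have hc1 : Continuous (fun δ : ℝ => (N : ℝ) + δ * N) := by fun_prop
    have hc2 : Continuous (fun δ : ℝ => (1 : ℝ) + δ * N) := by fun_prop
    have h1 : Filter.Tendsto (fun δ : ℝ => (N : ℝ) + δ * N) (nhds 0) (nhds (N : ℝ)) := by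
      simpa using hc1.tendsto 0
    have h2 : Filter.Tendsto (fun δ : ℝ => (1 : ℝ) + δ * N) (nhds 0) (nhds (1 : ℝ)) := by
      simpa using hc2.tendsto 0
    have := (h1.div h2 one_ne_zero).mono_left (nhdsWithin_le_nhds (s := Set.Ioi 0))
    simpa [Pi.div_def] using this
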